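/- Let ℓ be a prime and M a 2×2 matrix over ZMod ℓ that is not a scalar matrix and satisfies (M − a•1)² = 0 for some a ∈ ZMod ℓ. Then there is exactly one one-dimensional ZMod ℓ-subspace W of (Fin 2 → ZMod ℓ) that is invariant under M. -/
import Mathlib

open Module Submodule

lemma eq_of_dim_one_aux {K V : Type*} [Field K] [AddCommGroup V] [Module K V]
    (W W' : Submodule K V) [FiniteDimensional K W] [FiniteDimensional K W']
    (hW : Module.finrank K W = 1) (hW' : Module.finrank K W' = 1)
    (u : V) (hu : u ≠ 0) (h1 : u ∈ W) (h2 : u ∈ W') : W = W' := by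
  have e1 : Submodule.span K {u} = W :=
    Submodule.eq_of_le_of_finrank_eq ((Submodule.span_singleton_le_iff_mem u W).2 h1)
      (by rw [finrank_span_singleton hu, hW])
  have e2 : Submodule.span K {u} = W' :=
    Submodule.eq_of_le_of_finrank_eq ((Submodule.span_singleton_le_iff_mem u W').2 h2)
      (by rw [finrank_span_singleton hu, hW'])
  rw [← e1, e2]

theorem one_invariant_line_of_ramified (ℓ : ℕ) [Fact ℓ.Prime]
    (M : Matrix (Fin 2) (Fin 2) (ZMod ℓ))
    (hM : ∀ c : ZMod ℓ, M ≠ c • (1 : Matrix (Fin 2) (Fin 2) (ZMod ℓ)))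
    (a : ZMod ℓ) (ha : (M - a • (1 : Matrix (Fin 2) (Fin 2) (ZMod ℓ))) ^ 2 = 0) :
    {W : Submodule (ZMod ℓ) (Fin 2 → ZMod ℓ) |
      Module.finrank (ZMod ℓ) W = 1 ∧ ∀ w ∈ W, M.mulVec w ∈ W}.ncard = 1 := by
  set N := M - a • (1 : Matrix (Fin 2) (Fin 2) (ZMod ℓ)) with hNdef
  have hMN : M = N + a • 1 := by rw [hNdef]; abel
  have hN0 : N ≠ 0 := fun h => hM a (by rw [← sub_eq_zero]; exact h)
  set f : (Fin 2 → ZMod ℓ) →ₗ[ZMod ℓ] (Fin 2 → ZMod ℓ) := Matrix.toLin' N with hfdef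
  have hf0 : f ≠ 0 := by
    intro h
    rw [hfdef] at h
    exact hN0 (Matrix.toLin'.injective (h.trans (map_zero _).symm))
  have hfapp : ∀ v, f v = N.mulVec v := fun v => Matrix.toLin'_apply N v
  have hff : ∀ v, f (f v) = 0 := by
    intro v
    have h1 : Matrix.toLin' (N * N) v = f (f v) := by
      rw [Matrix.toLin'_mul]; rfl
    have h2 : N * N = 0 := by rw [← pow_two]; exact ha
    rw [← h1, h2, map_zero]; rfl
  have hrk : LinearMap.range f ≤ LinearMap.ker f := by
    rintro x ⟨y, rfl⟩
    exact hff y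
  have hdim : finrank (ZMod ℓ) (LinearMap.range f) + finrank (ZMod ℓ) (LinearMap.ker f) = 2 := by
    rw [LinearMap.finrank_range_add_finrank_ker]
    simp
  have hker_ne_top : LinearMap.ker f ≠ ⊤ := by
    intro h
    exact hf0 (LinearMap.ker_eq_top.mp h)
  have hrange_ne_bot : LinearMap.range f ≠ ⊥ := by
    intro h
    exact hf0 (LinearMap.range_eq_bot.mp h)
  have hr_pos : 1 ≤ finrank (ZMod ℓ) (LinearMap.range f) :=
    Nat.one_le_iff_ne_zero.mpr (fun h' => hrange_ne_bot (Submodule.finrank_eq_zero.mp h'))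
  have hk_lt : finrank (ZMod ℓ) (LinearMap.ker f) < 2 := by
    by_contra h
    push_neg at h
    have h2 : finrank (ZMod ℓ) (LinearMap.ker f) = 2 := le_antisymm (by omega) h
    exact hker_ne_top (Submodule.eq_top_of_finrank_eq (by simpa using h2))
  have hmono : finrank (ZMod ℓ) (LinearMap.range f) ≤ finrank (ZMod ℓ) (LinearMap.ker f) :=
    Submodule.finrank_mono hrk
  have hr1 : finrank (ZMod ℓ) (LinearMap.range f) = 1 := by omega
  have hk1 : finrank (ZMod ℓ) (LinearMap.ker f) = 1 := by omega
  have hrk_eq : LinearMap.range f = LinearMap.ker f :=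
    Submodule.eq_of_le_of_finrank_eq hrk (by rw [hr1, hk1])
  set W0 := LinearMap.range f with hW0def
  have hMmul : ∀ w : Fin 2 → ZMod ℓ, M.mulVec w = N.mulVec w + a • w := by
    intro w
    rw [hMN, Matrix.add_mulVec, Matrix.smul_mulVec, Matrix.one_mulVec]
  have hmem : W0 ∈ {W : Submodule (ZMod ℓ) (Fin 2 → ZMod ℓ) |
      Module.finrank (ZMod ℓ) W = 1 ∧ ∀ w ∈ W, M.mulVec w ∈ W} := by
    refine ⟨hr1, fun w hw => ?_⟩
    have hwker : w ∈ LinearMap.ker f := hrk_eq ▸ hw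
    have : N.mulVec w = 0 := by rw [← hfapp]; exact hwker
    rw [hMmul, this, zero_add]
    exact W0.smul_mem a hw
  have huniq : ∀ W ∈ {W : Submodule (ZMod ℓ) (Fin 2 → ZMod ℓ) |
      Module.finrank (ZMod ℓ) W = 1 ∧ ∀ w ∈ W, M.mulVec w ∈ W}, W = W0 := by
    rintro W ⟨hW1, hWinv⟩
    have hWne : W ≠ ⊥ := by
      intro h
      rw [h] at hW1
      simp at hW1
    obtain ⟨v, hvW, hv0⟩ := Submodule.ne_bot_iff W |>.mp hWne
    have hNinv : f v ∈ W := by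
      have : N.mulVec v = M.mulVec v - a • v := by rw [hMmul]; ring
      rw [hfapp, this]
      exact W.sub_mem (hWinv v hvW) (W.smul_mem a hvW)
    by_cases hfv : f v = 0
    · -- v ∈ ker f = range f = W0
      have hvW0 : v ∈ W0 := by rw [hrk_eq]; exact hfv
      exact eq_of_dim_one_aux W W0 hW1 hr1 v hv0 hvW hvW0
    · have hu0 : f v ∈ W0 := ⟨v, rfl⟩
      exact eq_of_dim_one_aux W W0 hW1 hr1 (f v) hfv hNinv hu0
  have : {W : Submodule (ZMod ℓ) (Fin 2 → ZMod ℓ) |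
      Module.finrank (ZMod ℓ) W = 1 ∧ ∀ w ∈ W, M.mulVec w ∈ W} = {W0} := by
    ext W
    simp only [Set.mem_singleton_iff]
    exact ⟨fun h => huniq W h, fun h => h ▸ hmem⟩
  rw [this, Set.ncard_singleton]
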